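/- Let n ≥ 1 and let u be a diagonal complex n×n matrix. Then [u ⊗ 1 − 1 ⊗ u, 2Ω_k − Ω] = 0, equivalently [u ⊗ 1, 2Ω_k − Ω] + [2Ω_k − Ω, 1 ⊗ u] = 0, where Ω := Σ_{a,b=1}^n E_{ab} ⊗ E_{ba} and Ω_k := −(1/4) Σ_{a,b=1}^n (E_{ab} − E_{ba}) ⊗ (E_{ab} − E_{ba}) (Kronecker products). -/

import Mathlib

open Matrix Kronecker BigOperators

/-- The matrix unit `E a b` with a `1` in entry `(a,b)` and `0` elsewhere. -/
noncomputable def E (n : ℕ) (a b : Fin n) : Matrix (Fin n) (Fin n) ℂ :=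
  Matrix.single a b 1

/-- The Casimir tensor `Ω = Σ_{a,b} E_{ab} ⊗ E_{ba}` of `gl_n`, as a Kronecker product. -/
noncomputable def Omega (n : ℕ) : Matrix (Fin n × Fin n) (Fin n × Fin n) ℂ :=
  ∑ a : Fin n, ∑ b : Fin n, E n a b ⊗ₖ E n b a

/-- The Casimir tensor `Ω_k = -(1/4) Σ_{a,b} (E_{ab} - E_{ba}) ⊗ (E_{ab} - E_{ba})` of `so_n`. -/
noncomputable def OmegaK (n : ℕ) : Matrix (Fin n × Fin n) (Fin n × Fin n) ℂ :=
  -(1 / 4 : ℂ) • ∑ a : Fin n, ∑ b : Fin n, (E n a b - E n b a) ⊗ₖ (E n a b - E n b a)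

/-- Entrywise formula: `2Ω_k − Ω` has entry `-1` at `((i,i),(k,k))` and `0` elsewhere. -/
lemma M_apply (n : ℕ) (p q : Fin n × Fin n) :
    ((2 : ℂ) • OmegaK n - Omega n) p q
      = if p.1 = p.2 ∧ q.1 = q.2 then (-1 : ℂ) else 0 := by
  obtain ⟨i, j⟩ := p
  obtain ⟨k, l⟩ := q
  simp only [OmegaK, Omega, E, Matrix.sub_apply, Matrix.smul_apply, Matrix.neg_apply,
    Matrix.sum_apply, Matrix.kroneckerMap_apply, Matrix.single,
    Matrix.of_apply, smul_eq_mul, sub_mul, mul_sub, ite_mul, mul_ite, mul_one, mul_zero,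
    one_mul, zero_mul, Finset.sum_sub_distrib]
  simp only [Finset.sum_ite_eq, Finset.sum_ite_eq', Finset.mem_univ, if_true, ite_and,
    Finset.sum_ite_irrel, Finset.sum_const_zero]
  split_ifs <;> subst_vars <;> first | ring1 | tauto

theorem commutator_u_twoOmegaK_sub_Omega_eq_zero (n : ℕ) (hn : 1 ≤ n)
    (u : Matrix (Fin n) (Fin n) ℂ) (hu : u.IsDiag) :
    (u ⊗ₖ (1 : Matrix (Fin n) (Fin n) ℂ) - (1 : Matrix (Fin n) (Fin n) ℂ) ⊗ₖ u)
        * ((2 : ℂ) • OmegaK n - Omega n)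
      - ((2 : ℂ) • OmegaK n - Omega n)
        * (u ⊗ₖ (1 : Matrix (Fin n) (Fin n) ℂ) - (1 : Matrix (Fin n) (Fin n) ℂ) ⊗ₖ u)
      = 0 := by
  have hX : ∀ p q : Fin n × Fin n,
      ((u ⊗ₖ (1 : Matrix (Fin n) (Fin n) ℂ) - (1 : Matrix (Fin n) (Fin n) ℂ) ⊗ₖ u) p q)
        = if p = q then u p.1 p.1 - u p.2 p.2 else 0 := by
    rintro ⟨i, j⟩ ⟨k, l⟩
    simp only [Matrix.sub_apply, Matrix.kroneckerMap_apply, Matrix.one_apply, Prod.mk.injEq,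
      Prod.ext_iff]
    by_cases h1 : i = k <;> by_cases h2 : j = l <;> subst_vars <;>
      simp_all <;> exact hu (by assumption)
  ext p q
  rw [Matrix.sub_apply, Matrix.zero_apply, Matrix.mul_apply, Matrix.mul_apply, sub_eq_zero]
  refine Finset.sum_congr rfl fun r _ => ?_
  rw [hX p r, hX r q, M_apply, M_apply]
  obtain ⟨p1, p2⟩ := p
  obtain ⟨q1, q2⟩ := q
  obtain ⟨r1, r2⟩ := r
  split_ifs <;> simp_all [Prod.ext_iff] <;> subst_vars <;> first | ring1 | simp_all
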